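/- Let K ⊆ ℂ be compact, let U ⊆ ℂ be an open set with K ⊆ U, let (Ω, 𝒜) be a measurable space, and let f : Ω × K → ℂ be such that f(·,z) is measurable for all z ∈ K and, for each ω ∈ Ω, there exists a function g_ω holomorphic on U with g_ω(z) = f(ω,z) for all z ∈ K. Then there exists F : Ω × U → ℂ such that F(·,z) is measurable for all z ∈ U, F(ω,·) is holomorphic on U for all ω ∈ Ω, and F(ω,z) = f(ω,z) for all (ω,z) ∈ Ω × K. -/

import Mathlib

open Metric Set Filter
open scoped Topology

lemma dslope_differentiableOn {f : ℂ → ℂ} {s : Set ℂ} (hs : IsOpen s)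
    (hf : DifferentiableOn ℂ f s) {b : ℂ} (hb : b ∈ s) :
    DifferentiableOn ℂ (dslope f b) s := by
  intro x hx
  rcases eq_or_ne x b with rfl | hxb
  · obtain ⟨p, hp⟩ := hf.analyticAt (hs.mem_nhds hx)
    exact hp.has_fpower_series_dslope_fslope.analyticAt.differentiableAt.differentiableWithinAt
  · exact (differentiableWithinAt_dslope_of_ne hxb).mpr (hf x hx)

/-- The Newton iteration operator: `N f n` after `n` divided-difference steps at nodes `v`. -/
noncomputable def newtonStep (v : ℕ → ℂ) (f : ℂ → ℂ) : ℕ → ℂ → ℂ :=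
  fun n => Nat.rec f (fun j h => dslope h (v j)) n

lemma newtonStep_zero (v : ℕ → ℂ) (f : ℂ → ℂ) : newtonStep v f 0 = f := rfl

lemma newtonStep_succ (v : ℕ → ℂ) (f : ℂ → ℂ) (n : ℕ) :
    newtonStep v f (n + 1) = dslope (newtonStep v f n) (v n) := rfl

lemma newtonStep_key (v : ℕ → ℂ) (f : ℂ → ℂ) (n : ℕ) (z : ℂ) :
    newtonStep v f n z
      = newtonStep v f n (v n) + newtonStep v f (n + 1) z * (z - v n) := by
  rcases eq_or_ne z (v n) with rfl | hz
  · simp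
  · rw [newtonStep_succ, dslope_of_ne _ hz, slope_def_field]
    field_simp [sub_ne_zero.mpr hz]
    ring

/-- Newton expansion with remainder. -/
lemma newtonStep_expansion (v : ℕ → ℂ) (f : ℂ → ℂ) (n : ℕ) (z : ℂ) :
    f z = (∑ j ∈ Finset.range n,
        newtonStep v f j (v j) * ∏ i ∈ Finset.range j, (z - v i))
      + newtonStep v f n z * ∏ i ∈ Finset.range n, (z - v i) := by
  induction n with
  | zero => simp [newtonStep_zero]
  | succ n ih =>
    rw [Finset.sum_range_succ, Finset.prod_range_succ, ih, newtonStep_key v f n z]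
    ring

lemma newtonStep_differentiableOn {v : ℕ → ℂ} {a : ℂ} {R : ℝ}
    (hv : ∀ i, v i ∈ ball a (R / 8)) {f : ℂ → ℂ}
    (hf : DifferentiableOn ℂ f (ball a R)) (hR : 0 < R) (n : ℕ) :
    DifferentiableOn ℂ (newtonStep v f n) (ball a R) := by
  induction n with
  | zero => exact hf
  | succ n ih =>
    exact dslope_differentiableOn isOpen_ball ih
      (ball_subset_ball (by linarith) (hv n))

lemma newtonStep_bound {v : ℕ → ℂ} {a : ℂ} {R : ℝ} (hR : 0 < R)
    (hv : ∀ i, v i ∈ ball a (R / 8)) {f : ℂ → ℂ}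
    (hf : DifferentiableOn ℂ f (ball a R)) {M : ℝ}
(hM : ∀ w ∈ closedBall a (3 * R / 4), ‖f w‖ ≤ M) (n : ℕ) :
    ∀ w ∈ closedBall a (3 * R / 4), ‖newtonStep v f n w‖ ≤ M * (16 / (5 * R)) ^ n := by
  have hM0 : 0 ≤ M :=
    le_trans (norm_nonneg _) (hM a (mem_closedBall_self (by positivity)))
  induction n with
  | zero => simpa [newtonStep_zero] using hM
  | succ n ih =>
    intro w hw
    have hsub : closedBall a (3 * R / 4) ⊆ ball a R :=
      closedBall_subset_ball (by linarith)
    have hdiff : DifferentiableOn ℂ (newtonStep v f (n + 1)) (ball a R) :=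
      newtonStep_differentiableOn hv hf hR (n + 1)
    have hcl : closure (ball a (3 * R / 4)) = closedBall a (3 * R / 4) :=
      closure_ball a (by positivity)
    have hdc : DiffContOnCl ℂ (newtonStep v f (n + 1)) (ball a (3 * R / 4)) :=
      ⟨hdiff.mono (ball_subset_ball (by linarith)),
        (hdiff.continuousOn).mono (by rw [hcl]; exact hsub)⟩
    refine Complex.norm_le_of_forall_mem_frontier_norm_le isBounded_ball hdc ?_ ?_
    · intro x hx
      rw [frontier_ball a (by positivity : (3 * R / 4 : ℝ) ≠ 0)] at hx
      have hxa : dist x a = 3 * R / 4 := mem_sphere.mp hx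
      have hvn := hv n
      have hxv : dist x (v n) ≥ 5 * R / 8 := by
        have h1 : dist (v n) a < R / 8 := mem_ball.mp hvn
        have := dist_triangle x (v n) a
        have h2 : dist (v n) a = dist a (v n) := dist_comm _ _
        nlinarith [dist_triangle a x (v n), dist_comm x a, dist_comm x (v n),
          dist_triangle x (v n) a]
      have hne : x ≠ v n := by
        intro h; rw [h] at hxv; simp at hxv; nlinarith
      rw [newtonStep_succ, dslope_of_ne _ hne, slope_def_field]
      have hx' : x ∈ closedBall a (3 * R / 4) := by
        simpa [mem_closedBall, hxa] using le_refl _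
      have hb1 : ‖newtonStep v f n x‖ ≤ M * (16 / (5 * R)) ^ n := ih x hx'
      have hb2 : ‖newtonStep v f n (v n)‖ ≤ M * (16 / (5 * R)) ^ n := by
        refine ih (v n) ?_
        exact closedBall_subset_closedBall (by linarith) (ball_subset_closedBall hvn)
      have hquot : ‖newtonStep v f n x - newtonStep v f n (v n)‖ / ‖x - v n‖
          ≤ (2 * (M * (16 / (5 * R)) ^ n)) / (5 * R / 8) := by
        have hc : (0:ℝ) ≤ (16 / (5 * R)) ^ n := by positivity
        apply div_le_div₀ (by nlinarith)
        · calc ‖newtonStep v f n x - newtonStep v f n (v n)‖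
              ≤ ‖newtonStep v f n x‖ + ‖newtonStep v f n (v n)‖ := norm_sub_le _ _
            _ ≤ 2 * (M * (16 / (5 * R)) ^ n) := by linarith
        · positivity
        · simpa [Complex.dist_eq] using hxv
      calc ‖(newtonStep v f n x - newtonStep v f n (v n)) / (x - v n)‖
          ≤ (2 * (M * (16 / (5 * R)) ^ n)) / (5 * R / 8) := by
            rw [norm_div]; exact hquot
        _ = M * (16 / (5 * R)) ^ (n + 1) := by
            rw [pow_succ]; field_simp; ring
    · rw [hcl]; exact hw

/-- Measurability on a small ball around a point where `K` clusters. -/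
lemma measurable_on_small_ball {Ω : Type*} [MeasurableSpace Ω] {K : Set ℂ} {a : ℂ} {R : ℝ}
    (hR : 0 < R) (g : Ω → ℂ → ℂ)
    (hg : ∀ ω, DifferentiableOn ℂ (g ω) (ball a R))
    (hmeas : ∀ z ∈ K, Measurable fun ω => g ω z)
    (hinf : (K ∩ ball a (R / 8)).Infinite) :
    ∀ z ∈ ball a (R / 8), Measurable fun ω => g ω z := by
  intro z hz
  set u := hinf.natEmbedding with hu
  set v : ℕ → ℂ := fun n => (u n : ℂ) with hv
  have hvK : ∀ n, v n ∈ K := fun n => (u n).2.1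
  have hvB : ∀ n, v n ∈ ball a (R / 8) := fun n => (u n).2.2
  have hvinj : Function.Injective v := fun i j h => u.injective (Subtype.ext h)
  -- measurability of the Newton coefficients
  have hcoeff : ∀ j, ∀ i, j ≤ i → Measurable fun ω => newtonStep v (g ω) j (v i) := by
    intro j
    induction j with
    | zero => intro i _; exact hmeas (v i) (hvK i)
    | succ j ih =>
      intro i hi
      have hne : v i ≠ v j := fun h => (Nat.ne_of_gt (Nat.lt_of_succ_le hi)) (hvinj h)
      have heq : (fun ω => newtonStep v (g ω) (j + 1) (v i))
          = fun ω => (newtonStep v (g ω) j (v i) - newtonStep v (g ω) j (v j)) / (v i - v j) := by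
        funext ω
        rw [newtonStep_succ, dslope_of_ne _ hne, slope_def_field]
      rw [heq]
      exact ((ih i (Nat.le_of_succ_le hi)).sub (ih j le_rfl)).div_const _
  -- partial sums
  set S : ℕ → Ω → ℂ := fun k ω => ∑ j ∈ Finset.range k,
    newtonStep v (g ω) j (v j) * ∏ i ∈ Finset.range j, (z - v i) with hS
  have hSmeas : ∀ k, Measurable (S k) := by
    intro k
    exact Finset.measurable_sum _ (fun j _ => (hcoeff j j le_rfl).mul_const _)
  have hlim : ∀ ω, Tendsto (fun k => S k ω) atTop (𝓝 (g ω z)) := by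
    intro ω
    have hcont : ContinuousOn (g ω) (closedBall a (3 * R / 4)) :=
      ((hg ω).continuousOn).mono (closedBall_subset_ball (by linarith))
    obtain ⟨M, hM⟩ := (isCompact_closedBall a (3 * R / 4)).exists_bound_of_continuousOn hcont
    have hzc : z ∈ closedBall a (3 * R / 4) := by
      have := mem_ball.mp hz
      exact mem_closedBall.mpr (by nlinarith [dist_nonneg (x := z) (y := a)])
    have hrem : ∀ k, ‖g ω z - S k ω‖ ≤ M * (4 / 5) ^ k := by
      intro k
      have hexp := newtonStep_expansion v (g ω) k z
      have h1 : g ω z - S k ω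
          = newtonStep v (g ω) k z * ∏ i ∈ Finset.range k, (z - v i) := by
        rw [hS]; rw [hexp]; ring
      rw [h1, norm_mul]
      have hb := newtonStep_bound hR hvB (hg ω) hM k z hzc
      have hprod : ‖∏ i ∈ Finset.range k, (z - v i)‖ ≤ (R / 4) ^ k := by
        rw [norm_prod]
        calc ∏ i ∈ Finset.range k, ‖z - v i‖
            ≤ ∏ _i ∈ Finset.range k, (R / 4) := by
              refine Finset.prod_le_prod (fun i _ => norm_nonneg _) (fun i _ => ?_)
              have h1 := mem_ball.mp hz
              have h2 := mem_ball.mp (hvB i)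
              have := dist_triangle z a (v i)
              rw [← dist_eq_norm]
              calc dist z (v i) ≤ dist z a + dist a (v i) := dist_triangle _ _ _
                _ ≤ R / 8 + R / 8 := by
                    rw [dist_comm a (v i)]; exact add_le_add h1.le h2.le
                _ ≤ R / 4 := by linarith
          _ = (R / 4) ^ k := by
              rw [Finset.prod_const, Finset.card_range]
      have hM0 : 0 ≤ M :=
        le_trans (norm_nonneg _) (hM a (mem_closedBall_self (by positivity)))
      calc ‖newtonStep v (g ω) k z‖ * ‖∏ i ∈ Finset.range k, (z - v i)‖
          ≤ (M * (16 / (5 * R)) ^ k) * (R / 4) ^ k := by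
            refine mul_le_mul hb hprod (norm_nonneg _) (by positivity)
        _ = M * (4 / 5) ^ k := by
            rw [mul_assoc, ← mul_pow]
            congr 2
            field_simp
            ring
    have h0 : Tendsto (fun k => g ω z - S k ω) atTop (𝓝 0) := by
      refine squeeze_zero_norm hrem ?_
      simpa using (tendsto_pow_atTop_nhds_zero_of_lt_one (by norm_num : (0:ℝ) ≤ 4/5)
        (by norm_num : (4:ℝ)/5 < 1)).const_mul M
    have h2 : Tendsto (fun k => g ω z - (g ω z - S k ω)) atTop (𝓝 (g ω z - 0)) :=
      (tendsto_const_nhds (x := g ω z) (f := atTop)).sub h0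
    simpa using h2
  exact measurable_of_tendsto_metrizable hSmeas (tendsto_pi_nhds.mpr hlim)

/-- If `g ω` is differentiable on an open set `W` and `ω ↦ g ω z` is measurable for each
`z ∈ W`, then so is `ω ↦ deriv (g ω) z` for `z ∈ W`. -/
lemma measurable_deriv_of_measurable {Ω : Type*} [MeasurableSpace Ω] {W : Set ℂ}
    (hW : IsOpen W) (g : Ω → ℂ → ℂ) (hg : ∀ ω, DifferentiableOn ℂ (g ω) W)
    (hmeas : ∀ z ∈ W, Measurable fun ω => g ω z) :
    ∀ z ∈ W, Measurable fun ω => deriv (g ω) z := by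
  intro z hz
  obtain ⟨ε, hε, hball⟩ := Metric.isOpen_iff.mp hW z hz
  set w : ℕ → ℂ := fun n => z + ((ε / (n + 2) : ℝ) : ℂ) with hw
  have hwmem : ∀ n, w n ∈ W := by
    intro n
    apply hball
    rw [mem_ball, hw]
    have h1 : (0:ℝ) < ε / (n + 2) := by positivity
    have h2 : (ε / (n + 2) : ℝ) < ε := by
      rw [div_lt_iff₀ (by positivity)]
      nlinarith [Nat.cast_nonneg (α := ℝ) n]
    simp only [dist_eq_norm, add_sub_cancel_left, Complex.norm_real, Real.norm_eq_abs]
    rw [abs_of_pos h1]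
    exact h2
  have hwne : ∀ n, w n ≠ z := by
    intro n h
    rw [hw] at h
    simp only [add_eq_left, Complex.ofReal_eq_zero] at h
    have h1 : (0:ℝ) < ε / (n + 2) := by positivity
    rw [h] at h1
    exact lt_irrefl _ h1
  have hwten : Tendsto w atTop (𝓝[≠] z) := by
    apply tendsto_nhdsWithin_of_tendsto_nhds_of_eventually_within
    · rw [hw]
      have h0 : Tendsto (fun n : ℕ => (ε / (n + 2) : ℝ)) atTop (𝓝 0) :=
        tendsto_const_nhds.div_atTop
          (tendsto_atTop_add_const_right atTop 2 tendsto_natCast_atTop_atTop)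
      have h2 : Tendsto (fun n : ℕ => ((ε / (n + 2) : ℝ) : ℂ)) atTop (𝓝 0) := by
        rw [show ((0:ℂ)) = ((0:ℝ):ℂ) by norm_num]
        exact (Complex.continuous_ofReal.tendsto 0).comp h0
      simpa using (tendsto_const_nhds (x := z) (f := atTop)).add h2
    · exact Eventually.of_forall fun n => hwne n
  have hslope : ∀ ω, Tendsto (fun n => slope (g ω) z (w n)) atTop (𝓝 (deriv (g ω) z)) := by
    intro ω
    have hd : HasDerivAt (g ω) (deriv (g ω) z) z :=
      (((hg ω) z hz).differentiableAt (hW.mem_nhds hz)).hasDerivAt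
    exact (hasDerivAt_iff_tendsto_slope.mp hd).comp hwten
  have hsm : ∀ n, Measurable fun ω => slope (g ω) z (w n) := by
    intro n
    have : (fun ω => slope (g ω) z (w n))
        = fun ω => (w n - z)⁻¹ • (g ω (w n) - g ω z) := by
      funext ω; rw [slope]; rfl
    rw [this]
    simp only [smul_eq_mul]
    exact ((hmeas (w n) (hwmem n)).sub (hmeas z hz)).const_mul _
  exact measurable_of_tendsto_metrizable hsm (tendsto_pi_nhds.mpr hslope)

/-- Iterated version. -/
lemma measurable_iterate_deriv_of_measurable {Ω : Type*} [MeasurableSpace Ω] {W : Set ℂ}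
    (hW : IsOpen W) :
    ∀ (n : ℕ) (g : Ω → ℂ → ℂ), (∀ ω, DifferentiableOn ℂ (g ω) W) →
      (∀ z ∈ W, Measurable fun ω => g ω z) →
      ∀ z ∈ W, Measurable fun ω => deriv^[n] (g ω) z := by
  intro n
  induction n with
  | zero => intro g _ hmeas z hz; exact hmeas z hz
  | succ n ih =>
    intro g hg hmeas z hz
    have h1 : ∀ ω, DifferentiableOn ℂ (fun y => deriv (g ω) y) W :=
      fun ω => (((hg ω).analyticOnNhd hW).deriv).differentiableOn
    have h2 : ∀ z ∈ W, Measurable fun ω => deriv (g ω) z :=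
      measurable_deriv_of_measurable hW g hg hmeas
    have h3 := ih (fun ω => deriv (g ω)) h1 h2 z hz
    simpa [Function.iterate_succ_apply] using h3

lemma exists_cluster_point {K : Set ℂ} (hK : IsCompact K) (hinf : K.Infinite) :
    ∃ a ∈ K, ∀ ε > 0, (K ∩ ball a ε).Infinite := by
  by_contra h
  push_neg at h
  have h' : ∀ a ∈ K, ∃ ε > 0, (K ∩ ball a ε).Finite := by
    intro a ha
    obtain ⟨ε, hε, hfin⟩ := h a ha
    exact ⟨ε, hε, hfin⟩
  choose! ε hε hfin using h'
  obtain ⟨t, htK, ht⟩ := hK.elim_nhds_subcover (fun a => ball a (ε a)) (fun a ha =>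
    ball_mem_nhds a (hε a ha))
  have hsub : K ⊆ ⋃ a ∈ t, (K ∩ ball a (ε a)) := by
    intro x hx
    obtain ⟨a, hat, hxa⟩ := mem_iUnion₂.mp (ht hx)
    exact mem_iUnion₂.mpr ⟨a, hat, hx, hxa⟩
  exact hinf ((Set.Finite.biUnion t.finite_toSet
    (fun a ha => hfin a (htK a ha))).subset hsub)

/-- The extension theorem on a connected open set containing the compact set. -/
lemma component_extension {Ω : Type*} [MeasurableSpace Ω] {K W : Set ℂ}
    (hK : IsCompact K) (hW : IsOpen W) (hWc : IsPreconnected W) (hKW : K ⊆ W)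
    (f : Ω → ℂ → ℂ)
    (hf_meas : ∀ z ∈ K, Measurable fun ω => f ω z)
    (hf_ext : ∀ ω : Ω, ∃ g : ℂ → ℂ, DifferentiableOn ℂ g W ∧ ∀ z ∈ K, g z = f ω z) :
    ∃ F : Ω → ℂ → ℂ,
      (∀ z ∈ W, Measurable fun ω => F ω z) ∧
      (∀ ω : Ω, DifferentiableOn ℂ (F ω) W) ∧
      (∀ ω : Ω, ∀ z ∈ K, F ω z = f ω z) := by
  rcases Set.finite_or_infinite K with hfin | hinf
  · -- finite case: Lagrange interpolation
    classical
    set s := hfin.toFinset with hs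
    refine ⟨fun ω z => ∑ a ∈ s, f ω a * ∏ b ∈ s.erase a, ((a - b)⁻¹ * (z - b)), ?_, ?_, ?_⟩
    · intro z _
      exact Finset.measurable_sum _ (fun a ha =>
        (hf_meas a (hfin.mem_toFinset.mp ha)).mul_const _)
    · intro ω
      apply Differentiable.differentiableOn
      apply Differentiable.fun_sum
      intro a _
      apply Differentiable.const_mul
      apply Differentiable.fun_finsetProd
      intro b _
      exact (differentiable_id.sub_const b).const_mul _
    · intro ω c hc
      have hcs : c ∈ s := hfin.mem_toFinset.mpr hc
      show (∑ a ∈ s, f ω a * ∏ b ∈ s.erase a, ((a - b)⁻¹ * (c - b))) = f ω c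
      rw [Finset.sum_eq_single c]
      · have h1 : ∀ b ∈ s.erase c, (c - b)⁻¹ * (c - b) = 1 := by
          intro b hb
          have hbc : b ≠ c := Finset.ne_of_mem_erase hb
          exact inv_mul_cancel₀ (sub_ne_zero.mpr fun h => hbc h.symm)
        rw [Finset.prod_congr rfl h1, Finset.prod_const_one, mul_one]
      · intro a ha hac
        have hce : c ∈ s.erase a := Finset.mem_erase.mpr ⟨fun h => hac h.symm, hcs⟩
        rw [Finset.prod_eq_zero hce (by simp), mul_zero]
      · intro h; exact absurd hcs h
  · -- infinite case: unique analytic continuation, measurability propagates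
    choose g hg hgK using hf_ext
    obtain ⟨a, haK, hclus⟩ := exists_cluster_point hK hinf
    obtain ⟨R, hR, hball⟩ := Metric.isOpen_iff.mp hW a (hKW haK)
    have hbase : ∀ z ∈ ball a (R / 8), Measurable fun ω => g ω z := by
      refine measurable_on_small_ball hR g (fun ω => (hg ω).mono hball) ?_
        (hclus (R / 8) (by positivity))
      intro z hzK
      have : (fun ω => g ω z) = fun ω => f ω z := funext fun ω => hgK ω z hzK
      rw [this]; exact hf_meas z hzK
    set S : Set ℂ := {z | z ∈ W ∧ ∃ ε > 0, ball z ε ⊆ W ∧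
      ∀ y ∈ ball z ε, Measurable fun ω => g ω y} with hSdef
    have haS : a ∈ S :=
      ⟨hKW haK, R / 8, by positivity,
        (ball_subset_ball (by linarith)).trans hball, hbase⟩
    have hSop : IsOpen S := by
      rw [Metric.isOpen_iff]
      rintro z ⟨hzW, ε, hε, hεW, hm⟩
      refine ⟨ε / 2, by positivity, ?_⟩
      rintro z' hz'
      have hz'z : dist z' z < ε / 2 := mem_ball.mp hz'
      refine ⟨hεW (mem_ball.mpr (by linarith)), ε / 2, by positivity, ?_, ?_⟩
      · intro y hy
        have : dist y z < ε := by
          have := mem_ball.mp hy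
          calc dist y z ≤ dist y z' + dist z' z := dist_triangle _ _ _
            _ < ε := by linarith
        exact hεW (mem_ball.mpr this)
      · intro y hy
        have : dist y z < ε := by
          have := mem_ball.mp hy
          calc dist y z ≤ dist y z' + dist z' z := dist_triangle _ _ _
            _ < ε := by linarith
        exact hm y (mem_ball.mpr this)
    have hSclosed : ∀ z ∈ W, z ∈ closure S → z ∈ S := by
      intro z hzW hzc
      obtain ⟨R', hR', hballz⟩ := Metric.isOpen_iff.mp hW z hzW
      obtain ⟨s, hsB, hsS⟩ :=
        mem_closure_iff.mp hzc (ball z (R' / 4)) isOpen_ball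
          (mem_ball_self (by positivity))
      obtain ⟨hsW, ε, hε, hεW, hεmeas⟩ := hsS
      have hder : ∀ n, Measurable fun ω => deriv^[n] (g ω) s := fun n =>
        measurable_iterate_deriv_of_measurable isOpen_ball n g
          (fun ω => (hg ω).mono hεW) hεmeas s (mem_ball_self hε)
      have hsz : dist s z < R' / 4 := mem_ball.mp hsB
      have hsub : ball s (3 * R' / 4) ⊆ W := by
        intro y hy
        have := mem_ball.mp hy
        refine hballz (mem_ball.mpr ?_)
        calc dist y z ≤ dist y s + dist s z := dist_triangle _ _ _
          _ < R' := by linarith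
      have hmeasball : ∀ y ∈ ball s (3 * R' / 4), Measurable fun ω => g ω y := by
        intro y hy
        have hsum : ∀ ω, HasSum
            (fun n : ℕ => (Nat.factorial n : ℂ)⁻¹ • (y - s) ^ n • iteratedDeriv n (g ω) s) (g ω y) :=
          fun ω => Complex.hasSum_taylorSeries_on_ball ((hg ω).mono hsub) hy
        have hpart : ∀ k : ℕ, Measurable fun ω =>
            ∑ n ∈ Finset.range k, (Nat.factorial n : ℂ)⁻¹ • (y - s) ^ n • iteratedDeriv n (g ω) s := by
          intro k
          refine Finset.measurable_sum _ (fun n _ => ?_)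
          have : (fun ω => (Nat.factorial n : ℂ)⁻¹ • (y - s) ^ n • iteratedDeriv n (g ω) s)
              = fun ω => ((Nat.factorial n : ℂ)⁻¹ * (y - s) ^ n) * deriv^[n] (g ω) s := by
            funext ω
            rw [iteratedDeriv_eq_iterate]
            simp [smul_eq_mul]; ring
          rw [this]
          exact (hder n).const_mul _
        exact measurable_of_tendsto_metrizable hpart
          (tendsto_pi_nhds.mpr fun ω => (hsum ω).tendsto_sum_nat)
      refine ⟨hzW, R' / 4, by positivity, ?_, ?_⟩
      · exact fun y hy => hballz (ball_subset_ball (by linarith) hy)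
      · intro y hy
        refine hmeasball y (mem_ball.mpr ?_)
        have := mem_ball.mp hy
        calc dist y s ≤ dist y z + dist z s := dist_triangle _ _ _
          _ < 3 * R' / 4 := by
              rw [dist_comm z s] at *
              linarith
    have hWS : W ⊆ S := by
      by_contra hns
      obtain ⟨w0, hw0W, hw0S⟩ := not_subset.mp hns
      have h1 : W ⊆ S ∪ (closure S)ᶜ := by
        intro x hx
        by_cases hxS : x ∈ S
        · exact Or.inl hxS
        · exact Or.inr fun hc => hxS (hSclosed x hx hc)
      have h2 := hWc S (closure S)ᶜ hSop isClosed_closure.isOpen_compl h1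
        ⟨a, hKW haK, haS⟩
        ⟨w0, hw0W, fun hc => hw0S (hSclosed w0 hw0W hc)⟩
      obtain ⟨x, -, hxS, hxC⟩ := h2
      exact hxC (subset_closure hxS)
    refine ⟨g, ?_, hg, hgK⟩
    intro z hzW
    obtain ⟨-, ε, hε, -, hm⟩ := hWS hzW
    exact hm z (mem_ball_self hε)

/-- Lemma `U` of the paper. Let `K ⊆ ℂ` be compact, `U ⊇ K` open,
`(Ω, 𝒜)` a measurable space, and `f : Ω × K → ℂ` with `f (·, z)` measurable for all
`z ∈ K` and such that for each `ω` there is a function `g_ω` holomorphic on `U` with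
`g_ω = f (ω, ·)` on `K`. Then there is `F : Ω × U → ℂ` with `F (·, z)` measurable for all
`z ∈ U`, `F (ω, ·)` holomorphic on `U` for all `ω`, and `F = f` on `Ω × K`. -/
theorem measurable_extension_to_open
    {Ω : Type*} [MeasurableSpace Ω] {K U : Set ℂ}
    (hK : IsCompact K) (hU : IsOpen U) (hKU : K ⊆ U)
    (f : Ω → ℂ → ℂ)
    (hf_meas : ∀ z ∈ K, Measurable fun ω => f ω z)
    (hf_ext : ∀ ω : Ω, ∃ g : ℂ → ℂ, DifferentiableOn ℂ g U ∧ ∀ z ∈ K, g z = f ω z) :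
    ∃ F : Ω → ℂ → ℂ,
      (∀ z ∈ U, Measurable fun ω => F ω z) ∧
      (∀ ω : Ω, DifferentiableOn ℂ (F ω) U) ∧
      (∀ ω : Ω, ∀ z ∈ K, F ω z = f ω z) := by
  classical
  set P : Set ℂ → (Ω → ℂ → ℂ) → Prop := fun W F =>
    (∀ z ∈ W, Measurable fun ω => F ω z) ∧ (∀ ω, DifferentiableOn ℂ (F ω) W) ∧
      (∀ ω, ∀ z ∈ K ∩ W, F ω z = f ω z) with hP
  have hcomp : ∀ z₀ ∈ U, ∃ F, P (connectedComponentIn U z₀) F := by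
    intro z₀ hz₀
    set W := connectedComponentIn U z₀ with hWdef
    have hWopen : IsOpen W := hU.connectedComponentIn
    have hWpc : IsPreconnected W := isPreconnected_connectedComponentIn
    have hWU : W ⊆ U := connectedComponentIn_subset U z₀
    have hUWopen : IsOpen (U \ W) := by
      apply isOpen_iff_forall_mem_open.mpr
      rintro y ⟨hyU, hyW⟩
      refine ⟨connectedComponentIn U y, ?_, hU.connectedComponentIn,
        mem_connectedComponentIn hyU⟩
      intro x hx
      have hxU : x ∈ U := connectedComponentIn_subset U y hx
      refine ⟨hxU, fun hxW => hyW ?_⟩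
      have e1 : connectedComponentIn U y = connectedComponentIn U x :=
        connectedComponentIn_eq hx
      have e2 : connectedComponentIn U z₀ = connectedComponentIn U x :=
        connectedComponentIn_eq hxW
      have hmem : y ∈ connectedComponentIn U y := mem_connectedComponentIn hyU
      rw [e1, ← e2] at hmem
      exact hmem
    have hKWc : IsCompact (K ∩ W) := by
      have hEq : K ∩ W = K \ (U \ W) := by
        ext x
        constructor
        · rintro ⟨hxK, hxW⟩; exact ⟨hxK, fun h => h.2 hxW⟩
        · rintro ⟨hxK, hx⟩
          by_cases h : x ∈ W
          · exact ⟨hxK, h⟩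
          · exact absurd ⟨hKU hxK, h⟩ hx
      rw [hEq]
      exact hK.diff hUWopen
    refine component_extension hKWc hWopen hWpc inter_subset_right f
      (fun z hz => hf_meas z hz.1) ?_
    intro ω
    obtain ⟨g, hg, hgK⟩ := hf_ext ω
    exact ⟨g, hg.mono hWU, fun z hz => hgK z hz.1⟩
  set Φ : Set ℂ → (Ω → ℂ → ℂ) := fun W =>
    if h : ∃ F, P W F then h.choose else fun _ _ => 0 with hΦ
  have hΦP : ∀ W, (∃ F, P W F) → P W (Φ W) := by
    intro W h
    rw [hΦ]
    simp only [dif_pos h]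
    exact h.choose_spec
  refine ⟨fun ω z => if z ∈ U then Φ (connectedComponentIn U z) ω z else 0, ?_, ?_, ?_⟩
  · intro z hz
    simp only [if_pos hz]
    exact (hΦP _ (hcomp z hz)).1 z (mem_connectedComponentIn hz)
  · intro ω z hz
    have hC : IsOpen (connectedComponentIn U z) := hU.connectedComponentIn
    have hzC : z ∈ connectedComponentIn U z := mem_connectedComponentIn hz
    have hdiff : DifferentiableAt ℂ (Φ (connectedComponentIn U z) ω) z :=
      ((hΦP _ (hcomp z hz)).2.1 ω).differentiableAt (hC.mem_nhds hzC)
    have hloc : (fun y => if y ∈ U then Φ (connectedComponentIn U y) ω y else 0)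
        =ᶠ[nhds z] Φ (connectedComponentIn U z) ω := by
      filter_upwards [hC.mem_nhds hzC] with y hy
      have hyU : y ∈ U := connectedComponentIn_subset U z hy
      rw [if_pos hyU, ← connectedComponentIn_eq hy]
    exact (hdiff.congr_of_eventuallyEq hloc).differentiableWithinAt
  · intro ω z hzK
    have hzU : z ∈ U := hKU hzK
    simp only [if_pos hzU]
    exact (hΦP _ (hcomp z hzU)).2.2 ω z ⟨hzK, mem_connectedComponentIn hzU⟩
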